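/- A positive integer N satisfies: there exist coprime integers a, b with 2a² + ab + 4b² = 2N (equivalently -2N is primitively represented by the quadratic form with Gram matrix [[-2,-1],[-1,-4]]) if and only if N is a product of primes p with p ≡ 1, 2, or 4 mod 7, or 7 times such a product. -/

import Mathlib

/-- The ring `ℤ[α]` where `α = (1+√-7)/2`, so `α² = α - 2`. -/
structure R7 where
  re : ℤ
  im : ℤ
deriving DecidableEq

namespace R7

@[ext] theorem ext' : ∀ {z w : R7}, z.re = w.re → z.im = w.im → z = w
  | ⟨_, _⟩, ⟨_, _⟩, rfl, rfl => rfl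

instance : Zero R7 := ⟨⟨0, 0⟩⟩
instance : One R7 := ⟨⟨1, 0⟩⟩
instance : Add R7 := ⟨fun z w => ⟨z.re + w.re, z.im + w.im⟩⟩
instance : Neg R7 := ⟨fun z => ⟨-z.re, -z.im⟩⟩
instance : Mul R7 :=
  ⟨fun z w => ⟨z.re * w.re - 2 * z.im * w.im, z.re * w.im + z.im * w.re + z.im * w.im⟩⟩

@[simp] theorem zero_re : (0 : R7).re = 0 := rfl
@[simp] theorem zero_im : (0 : R7).im = 0 := rfl
@[simp] theorem one_re : (1 : R7).re = 1 := rfl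
@[simp] theorem one_im : (1 : R7).im = 0 := rfl
@[simp] theorem add_re (z w : R7) : (z + w).re = z.re + w.re := rfl
@[simp] theorem add_im (z w : R7) : (z + w).im = z.im + w.im := rfl
@[simp] theorem neg_re (z : R7) : (-z).re = -z.re := rfl
@[simp] theorem neg_im (z : R7) : (-z).im = -z.im := rfl
@[simp] theorem mul_re (z w : R7) : (z * w).re = z.re * w.re - 2 * z.im * w.im := rfl
@[simp] theorem mul_im (z w : R7) : (z * w).im = z.re * w.im + z.im * w.re + z.im * w.im := rfl

instance : CommRing R7 where
  add_assoc := by intros; ext <;> simp <;> ring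
  zero_add := by intros; ext <;> simp
  add_zero := by intros; ext <;> simp
  add_comm := by intros; ext <;> simp <;> ring
  neg_add_cancel := by intros; ext <;> simp
  mul_assoc := by intros; ext <;> simp <;> ring
  one_mul := by intros; ext <;> simp
  mul_one := by intros; ext <;> simp
  left_distrib := by intros; ext <;> simp <;> ring
  right_distrib := by intros; ext <;> simp <;> ring
  mul_comm := by intros; ext <;> simp <;> ring
  zero_mul := by intros; ext <;> simp
  mul_zero := by intros; ext <;> simp
  nsmul := fun n z => ⟨n * z.re, n * z.im⟩
  nsmul_zero := by intros; refine ext' ?_ ?_ <;> show _ * _ = _ <;> simp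
  nsmul_succ := by intros; refine ext' ?_ ?_ <;> show _ * _ = _ * _ + _ <;> push_cast <;> ring
  zsmul := fun n z => ⟨n * z.re, n * z.im⟩
  zsmul_zero' := by intros; refine ext' ?_ ?_ <;> show _ * _ = _ <;> simp
  zsmul_succ' := by intros; refine ext' ?_ ?_ <;> show _ * _ = _ * _ + _ <;> push_cast <;> ring
  zsmul_neg' := by intros; refine ext' ?_ ?_ <;> show _ * _ = -(_ * _) <;> simp [Int.negSucc_eq, add_mul] <;> ring
  natCast := fun n => ⟨n, 0⟩
  natCast_zero := by ext <;> simp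
  natCast_succ := by intros; ext <;> simp
  intCast := fun n => ⟨n, 0⟩
  intCast_ofNat := fun n => rfl
  intCast_negSucc := fun n => by
    refine ext' ?_ ?_
    · show Int.negSucc n = -((n + 1 : ℕ) : ℤ)
      simp [Int.negSucc_eq]
    · show (0 : ℤ) = -(0 : ℤ)
      simp

@[simp] theorem intCast_re (n : ℤ) : (n : R7).re = n := rfl
@[simp] theorem intCast_im (n : ℤ) : (n : R7).im = 0 := rfl
@[simp] theorem natCast_re (n : ℕ) : (n : R7).re = n := rfl
@[simp] theorem natCast_im (n : ℕ) : (n : R7).im = 0 := rfl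

theorem sub_re (z w : R7) : (z - w).re = z.re - w.re := by
  simp [sub_eq_add_neg]
theorem sub_im (z w : R7) : (z - w).im = z.im - w.im := by
  simp [sub_eq_add_neg]

/-- Conjugation. -/
def conj (z : R7) : R7 := ⟨z.re + z.im, -z.im⟩

@[simp] theorem conj_re (z : R7) : (conj z).re = z.re + z.im := rfl
@[simp] theorem conj_im (z : R7) : (conj z).im = -z.im := rfl

theorem conj_mul (z w : R7) : conj (z * w) = conj z * conj w := by
  ext <;> simp [conj] <;> ring

/-- The norm form `a² + ab + 2b²`. -/
def norm (z : R7) : ℤ := z.re * z.re + z.re * z.im + 2 * z.im * z.im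

theorem norm_mul (z w : R7) : norm (z * w) = norm z * norm w := by
  simp [norm]; ring

theorem mul_conj (z : R7) : z * conj z = (norm z : R7) := by
  ext <;> simp only [mul_re, mul_im, conj_re, conj_im, intCast_re, intCast_im, norm] <;> ring

theorem norm_nonneg (z : R7) : 0 ≤ norm z := by
  have : 4 * norm z = (2 * z.re + z.im) ^ 2 + 7 * z.im ^ 2 := by simp [norm]; ring
  nlinarith [sq_nonneg (2 * z.re + z.im), sq_nonneg z.im]

theorem norm_eq_zero_iff {z : R7} : norm z = 0 ↔ z = 0 := by
  constructor
  · intro h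
    have h4 : (2 * z.re + z.im) ^ 2 + 7 * z.im ^ 2 = 0 := by simp [norm] at h ⊢; nlinarith
    have him : z.im = 0 := by nlinarith [sq_nonneg (2 * z.re + z.im), sq_nonneg z.im]
    have hre : z.re = 0 := by nlinarith [sq_nonneg (2 * z.re + z.im)]
    ext <;> simp [hre, him]
  · rintro rfl; simp [norm]

instance : Nontrivial R7 := ⟨⟨0, 1, by intro h; simpa using congrArg re h⟩⟩

instance : NoZeroDivisors R7 where
  eq_zero_or_eq_zero_of_mul_eq_zero {a b} h := by
    by_contra hc
    push_neg at hc
    have ha := norm_eq_zero_iff.not.mpr hc.1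
    have hb := norm_eq_zero_iff.not.mpr hc.2
    have : norm a * norm b = 0 := by rw [← norm_mul, h]; simp [norm]
    rcases mul_eq_zero.mp this with h' | h' <;> [exact ha h'; exact hb h']

instance : IsDomain R7 := NoZeroDivisors.to_isDomain _

theorem norm_eq_one_iff {z : R7} : norm z = 1 ↔ IsUnit z := by
  constructor
  · intro h
    exact IsUnit.of_mul_eq_one (conj z) (by rw [mul_conj, h]; norm_num)
  · rintro ⟨u, rfl⟩
    have : norm (u : R7) * norm ((u⁻¹ : R7ˣ) : R7) = 1 := by
      rw [← norm_mul]
      simp [norm]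
    have h1 := norm_nonneg (u : R7)
    have h2 := norm_nonneg ((u⁻¹ : R7ˣ) : R7)
    exact Int.eq_one_of_mul_eq_one_right h1 this

theorem norm_dvd_norm {z w : R7} (h : z ∣ w) : norm z ∣ norm w := by
  obtain ⟨c, rfl⟩ := h
  exact ⟨norm c, norm_mul z c⟩

theorem intCast_dvd_iff (n : ℤ) (z : R7) : (n : R7) ∣ z ↔ n ∣ z.re ∧ n ∣ z.im := by
  constructor
  · rintro ⟨c, rfl⟩
    constructor
    · exact ⟨c.re, by simp⟩
    · exact ⟨c.im, by simp⟩
  · rintro ⟨⟨c, hc⟩, ⟨d, hd⟩⟩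
    exact ⟨⟨c, d⟩, by ext <;> simp [hc, hd]⟩

end R7

namespace R7

theorem norm_conj (z : R7) : norm (conj z) = norm z := by simp [norm, conj]; ring

/-- nearest-integer helper: for `0 < n`, `a - 2n*((a+n)/(2n)) ∈ [-n, n)`. -/
theorem near_bounds (a n : ℤ) (hn : 0 < n) :
    -n ≤ a - 2 * n * ((a + n) / (2 * n)) ∧ a - 2 * n * ((a + n) / (2 * n)) < n := by
  have h2n : 0 < 2 * n := by linarith
  have h1 : 0 ≤ (a + n) % (2 * n) := Int.emod_nonneg _ (by positivity)
  have h2 : (a + n) % (2 * n) < 2 * n := Int.emod_lt_of_pos _ h2n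
  have h3 : (a + n) % (2 * n) = a + n - 2 * n * ((a + n) / (2 * n)) := by
    rw [Int.emod_def]
  constructor <;> [linarith [h1, h3.symm ▸ h1]; linarith [h2, h3.symm ▸ h2]]

noncomputable def quot (x y : R7) : R7 :=
  let n := norm y
  let e := (x * conj y).re
  let f := (x * conj y).im
  let d := (2 * f + n) / (2 * n)
  let c := (2 * e + (f - d * n) + n) / (2 * n)
  ⟨c, d⟩

theorem quot_bound {x y : R7} (hy : y ≠ 0) :
    norm (x - quot x y * y) < norm y := by
  set n := norm y with hn
  have hnpos : 0 < n := lt_of_le_of_ne (norm_nonneg y) (fun h => hy (norm_eq_zero_iff.mp h.symm))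
  set e := (x * conj y).re with he
  set f := (x * conj y).im with hf
  set d := (2 * f + n) / (2 * n) with hd
  set c := (2 * e + (f - d * n) + n) / (2 * n) with hc
  have hq : quot x y = ⟨c, d⟩ := rfl
  set t := f - d * n with ht
  set s := e - c * n with hs
  -- bounds
  have hb1 := near_bounds (2 * f) n hnpos
  have h2t : -n ≤ 2 * t ∧ 2 * t < n := by
    have : 2 * f - 2 * n * ((2 * f + n) / (2 * n)) = 2 * t := by rw [ht, hd]; ring
    rw [← this]; exact hb1
  have hb2 := near_bounds (2 * e + t) n hnpos
  have h2s : -n ≤ 2 * s + t ∧ 2 * s + t < n := by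
    have : 2 * e + t - 2 * n * ((2 * e + t + n) / (2 * n)) = 2 * s + t := by
      rw [hs, hc, ht]; ring
    rw [← this]
    have : (2 * e + (f - d * n) + n) = (2 * e + t + n) := by rw [ht]
    rw [hc, this] at *
    exact hb2
  -- algebraic identity
  have key : (x - quot x y * y) * conj y = ⟨s, t⟩ := by
    have h1 : quot x y * y * conj y = quot x y * (norm y : R7) := by rw [mul_assoc, mul_conj]
    have : (x - quot x y * y) * conj y = x * conj y - quot x y * (norm y : R7) := by
      rw [sub_mul, h1]
    rw [this, hq]
    ext
    · show e - (c * n - 2 * d * 0) = s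
      rw [hs]; ring
    · show f - (c * 0 + d * n + d * 0) = t
      rw [ht]; ring
  have hnorm : norm (x - quot x y * y) * n = norm (⟨s, t⟩ : R7) := by
    rw [← key, norm_mul, norm_conj, hn]
  have hlt : norm (⟨s, t⟩ : R7) * 16 < 16 * n ^ 2 := by
    show (s * s + s * t + 2 * t * t) * 16 < 16 * n ^ 2
    nlinarith [h2t.1, h2t.2, h2s.1, h2s.2, sq_nonneg (2 * s + t), sq_nonneg (2 * t), hnpos]
  have : norm (x - quot x y * y) * n < n ^ 2 := by nlinarith
  have := lt_of_mul_lt_mul_right (by nlinarith : norm (x - quot x y * y) * n < n * n) (le_of_lt hnpos)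
  exact this

noncomputable instance : EuclideanDomain R7 where
  quotient := fun a b => if b = 0 then 0 else quot a b
  quotient_zero := fun a => by simp
  remainder := fun a b => if b = 0 then a else a - quot a b * b
  quotient_mul_add_remainder_eq := fun a b => by
    by_cases hb : b = 0 <;> simp [hb] <;> ring
  r := fun a b => (norm a).natAbs < (norm b).natAbs
  r_wellFounded := (measure fun z => (norm z).natAbs).wf
  remainder_lt := fun a b hb => by
    simp only [if_neg hb]
    have := quot_bound (x := a) hb
    have h1 := norm_nonneg (a - quot a b * b)
    have h2 := norm_nonneg b
    omega
  mul_left_not_lt := fun a b hb => by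
    have h1 : norm (a * b) = norm a * norm b := norm_mul a b
    have h2 : 1 ≤ norm b := by
      have := norm_nonneg b
      rcases lt_or_eq_of_le this with h | h
      · omega
      · exact absurd (norm_eq_zero_iff.mp h.symm) hb
    have h3 := norm_nonneg a
    simp only [not_lt, h1]
    have : norm a * 1 ≤ norm a * norm b := by
      apply mul_le_mul_of_nonneg_left h2 h3
    omega

end R7

namespace R7

theorem int_prime (p : ℕ) (hp : p.Prime) : Prime (p : ℤ) :=
  Int.prime_iff_natAbs_prime.mpr (by simpa using hp)

@[simp] theorem conj_conj (z : R7) : conj (conj z) = z := by ext <;> simp [conj]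

theorem conj_dvd {z w : R7} (h : z ∣ w) : conj z ∣ conj w := by
  obtain ⟨c, rfl⟩ := h; exact ⟨conj c, conj_mul z c⟩

theorem dvd_of_conj_dvd {z w : R7} (h : conj z ∣ conj w) : z ∣ w := by
  simpa using conj_dvd h

/-- Bezout-style coprime criterion. -/
theorem isCoprime_of_forall_dvd {x y : R7} (h : ∀ δ : R7, δ ∣ x → δ ∣ y → IsUnit δ) :
    IsCoprime x y := by
  classical
  have hg : IsUnit (EuclideanDomain.gcd x y) :=
    h _ (EuclideanDomain.gcd_dvd_left x y) (EuclideanDomain.gcd_dvd_right x y)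
  obtain ⟨u, hu⟩ := hg
  have hb := EuclideanDomain.gcd_eq_gcd_ab x y
  refine ⟨(u⁻¹ : R7ˣ) * EuclideanDomain.gcdA x y, (u⁻¹ : R7ˣ) * EuclideanDomain.gcdB x y, ?_⟩
  have : ((u⁻¹ : R7ˣ) : R7) * (x * EuclideanDomain.gcdA x y + y * EuclideanDomain.gcdB x y) = 1 := by
    rw [← hb, ← hu]
    simp
  calc ((u⁻¹ : R7ˣ) : R7) * EuclideanDomain.gcdA x y * x +
      ((u⁻¹ : R7ˣ) : R7) * EuclideanDomain.gcdB x y * y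
      = ((u⁻¹ : R7ˣ) : R7) * (x * EuclideanDomain.gcdA x y + y * EuclideanDomain.gcdB x y) := by
        ring
    _ = 1 := this

theorem isCoprime_of_prime_not_dvd {ρ v : R7} (hρ : Irreducible ρ) (h : ¬ρ ∣ v) :
    IsCoprime ρ v := by
  apply isCoprime_of_forall_dvd
  intro δ hδρ hδv
  obtain ⟨c, hc⟩ := hδρ
  rcases hρ.isUnit_or_isUnit hc with h1 | h1
  · exact h1
  · exfalso
    obtain ⟨w, hw⟩ := h1
    have hd : δ = ρ * (w⁻¹ : R7ˣ) := by
      rw [hc, ← hw, mul_assoc, Units.mul_inv, mul_one]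
    exact h (dvd_trans ⟨_, hd⟩ hδv)

/-- a nonunit–nonunit factorization of a prime square has a factor of prime norm -/
theorem norm_eq_prime_of_factor {p : ℕ} (hp : p.Prime) {x y : R7}
    (hxy : norm x * norm y = (p : ℤ) ^ 2) (hx : ¬IsUnit x) (hy : ¬IsUnit y) :
    norm x = p := by
  have hnx := norm_nonneg x
  have hny := norm_nonneg y
  set nx := (norm x).natAbs with hnxd
  set ny := (norm y).natAbs with hnyd
  have hxe : norm x = (nx : ℤ) := (Int.natAbs_of_nonneg hnx).symm
  have hye : norm y = (ny : ℤ) := (Int.natAbs_of_nonneg hny).symm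
  have hmul : nx * ny = p ^ 2 := by
    have := congrArg Int.natAbs hxy
    simpa [Int.natAbs_mul] using this
  have hdvd : nx ∣ p ^ 2 := ⟨ny, hmul.symm⟩
  obtain ⟨k, hk, hke⟩ := (Nat.dvd_prime_pow hp).mp hdvd
  interval_cases k
  · exfalso
    apply hx
    apply norm_eq_one_iff.mp
    simp only [pow_zero] at hke
    rw [hxe, hke]; norm_num
  · rw [hxe, hke]; push_cast; ring
  · exfalso
    apply hy
    apply norm_eq_one_iff.mp
    have hp2 : (0:ℕ) < p ^ 2 := pow_pos hp.pos 2
    have hny1 : ny = 1 := by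
      apply Nat.eq_of_mul_eq_mul_left hp2
      rw [mul_one]
      rw [hke] at hmul
      exact hmul
    rw [hye, hny1]; norm_num

theorem prime_of_norm_prime {π : R7} {p : ℕ} (hp : p.Prime) (hπ : norm π = p) : Prime π := by
  rw [← irreducible_iff_prime]
  constructor
  · intro hu
    rw [← norm_eq_one_iff, hπ] at hu
    exact_mod_cast hp.ne_one (by exact_mod_cast hu)
  · intro x y hxy
    by_contra hc
    push_neg at hc
    have h1 : norm x * norm y = (p : ℤ) := by rw [← norm_mul, ← hxy, hπ]
    have h2 : Prime (p : ℤ) := int_prime p hp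
    have hpne : (p : ℤ) ≠ 0 := Int.natCast_ne_zero.mpr hp.pos.ne'
    have hdvd : (p : ℤ) ∣ norm x * norm y := by rw [h1]
    rcases h2.2.2 _ _ hdvd with h3 | h3
    · obtain ⟨k, hk⟩ := h3
      have hk1 : k * norm y = 1 := by
        apply mul_left_cancel₀ hpne
        rw [← mul_assoc, ← hk, h1, mul_one]
      have hny1 : norm y = 1 :=
        Int.eq_one_of_dvd_one (norm_nonneg y) ⟨k, by linarith [hk1]⟩
      exact hc.2 (norm_eq_one_iff.mp hny1)
    · obtain ⟨k, hk⟩ := h3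
      have hk1 : norm x * k = 1 := by
        apply mul_left_cancel₀ hpne
        rw [show (p:ℤ) * (norm x * k) = norm x * ((p:ℤ) * k) by ring, ← hk, h1, mul_one]
      have hnx1 : norm x = 1 :=
        Int.eq_one_of_dvd_one (norm_nonneg x) ⟨k, hk1.symm⟩
      exact hc.1 (norm_eq_one_iff.mp hnx1)

/-- the prime √-7 (as 2α-1). -/
def u7 : R7 := ⟨-1, 2⟩

theorem norm_u7 : norm u7 = 7 := by simp [norm, u7]

theorem u7_sq : u7 * u7 = ((-7 : ℤ) : R7) := by
  ext <;> simp only [u7, mul_re, mul_im, intCast_re, intCast_im] <;> norm_num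

theorem conj_u7 : conj u7 = -u7 := by ext <;> simp [u7, conj]

theorem u7_prime : Prime u7 := prime_of_norm_prime (by norm_num) norm_u7

/-- mod 7 residues of the norm form -/
theorem norm_residue (z : R7) : ∃ x : ZMod 7, ((norm z : ℤ) : ZMod 7) = 2 * x ^ 2 := by
  refine ⟨((2 * z.re + z.im : ℤ) : ZMod 7), ?_⟩
  have h7 : (7 : ZMod 7) = 0 := by decide
  push_cast [norm]
  linear_combination (-(z.re : ZMod 7) ^ 2 - (z.re : ZMod 7) * (z.im : ZMod 7)) * h7

theorem mod7_of_norm_eq {p : ℕ} (hp : p.Prime) {π : R7} (hπ : norm π = p) :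
    p % 7 = 0 ∨ p % 7 = 1 ∨ p % 7 = 2 ∨ p % 7 = 4 := by
  obtain ⟨x, hx⟩ := norm_residue π
  rw [hπ] at hx
  have hcast : ((p : ℕ) : ZMod 7) = ((p % 7 : ℕ) : ZMod 7) := (ZMod.natCast_mod p 7).symm
  have hlt : p % 7 < 7 := Nat.mod_lt _ (by norm_num)
  by_contra hc
  push_neg at hc
  obtain ⟨h0, h1, h2, h4⟩ := hc
  have key : ∀ x : ZMod 7, ((p % 7 : ℕ) : ZMod 7) ≠ 2 * x ^ 2 := by
    interval_cases h : (p % 7) <;> first | omega | decide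
  exact key x (by rw [ZMod.natCast_mod]; exact_mod_cast hx)

theorem prime_int_cast_of_inert {p : ℕ} (hp : p.Prime)
    (h : ¬(p % 7 = 0 ∨ p % 7 = 1 ∨ p % 7 = 2 ∨ p % 7 = 4)) : Prime (p : R7) := by
  rw [← irreducible_iff_prime]
  have hnormp : norm (p : R7) = (p : ℤ) ^ 2 := by simp [norm]; ring
  constructor
  · intro hu
    rw [← norm_eq_one_iff, hnormp] at hu
    have := hp.two_le
    nlinarith [sq_nonneg ((p:ℤ))]
  · intro x y hxy
    by_contra hc
    push_neg at hc
    have h1 : norm x * norm y = (p : ℤ) ^ 2 := by rw [← norm_mul, ← hxy, hnormp]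
    have := norm_eq_prime_of_factor hp h1 hc.1 hc.2
    exact h (mod7_of_norm_eq hp this)

end R7

namespace R7

/-- Primes `≡ 1, 2, 4 mod 7` are norms. -/
theorem exists_norm_eq_prime {p : ℕ} (hp : p.Prime)
    (h : p % 7 = 1 ∨ p % 7 = 2 ∨ p % 7 = 4) : ∃ π : R7, norm π = p := by
  rcases eq_or_ne p 2 with rfl | hp2
  · exact ⟨⟨0, 1⟩, by simp [norm]⟩
  -- p odd
  have hodd : Odd p := hp.odd_of_ne_two hp2
  have hp7 : p ≠ 7 := by rintro rfl; simp at h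
  have hp3 : 3 ≤ p := by have := hp.two_le; omega
  -- (p) is a square mod 7
  have hps : IsSquare ((p : ℤ) : ZMod 7) := by
    have hcast : ((p : ℤ) : ZMod 7) = ((p % 7 : ℕ) : ZMod 7) := by
      rw [ZMod.natCast_mod]; push_cast; ring
    rw [hcast]
    rcases h with h | h | h <;> rw [h]
    · refine ⟨1, ?_⟩; push_cast; decide
    · refine ⟨3, ?_⟩; push_cast; decide
    · refine ⟨2, ?_⟩; push_cast; decide
  have hpnz7 : ((p : ℤ) : ZMod 7) ≠ 0 := by
    rw [Ne, ZMod.intCast_zmod_eq_zero_iff_dvd]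
    intro hd
    exact hp7 ((Nat.prime_dvd_prime_iff_eq (by norm_num) hp).mp (by exact_mod_cast hd)).symm
  haveI : Fact p.Prime := ⟨hp⟩
  haveI : Fact (Nat.Prime 7) := ⟨by norm_num⟩
  have h7p : legendreSym 7 p = 1 := (legendreSym.eq_one_iff 7 hpnz7).mpr hps
  have h7nzp : ((7 : ℤ) : ZMod p) ≠ 0 := by
    rw [Ne, ZMod.intCast_zmod_eq_zero_iff_dvd]
    intro hd
    exact hp7 ((Nat.prime_dvd_prime_iff_eq hp (by norm_num)).mp (by exact_mod_cast hd))
  have hQR := legendreSym.quadratic_reciprocity (p := p) (q := 7) hp2 (by norm_num)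
    (by exact hp7)
  push_cast at hQR
  have hχ : legendreSym p (-1) = (-1) ^ (p / 2) := by
    rw [legendreSym.at_neg_one hp2, ZMod.χ₄_eq_neg_one_pow (Nat.odd_iff.mp hodd)]
  have hneg7 : legendreSym p (-7) = 1 := by
    have hm : legendreSym p (-7) = legendreSym p (-1) * legendreSym p 7 := by
      rw [← legendreSym.mul]; norm_num
    have hpow : ((-1 : ℤ)) ^ (p / 2 * 3) = (-1) ^ (p / 2) := by
      rw [pow_mul]
      rcases Nat.even_or_odd (p / 2) with he | ho
      · rw [he.neg_one_pow]; norm_num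
      · rw [ho.neg_one_pow]; norm_num
    rw [h7p, one_mul, hpow] at hQR
    rw [hm, hχ, hQR, ← pow_add]
    exact Even.neg_one_pow ⟨p / 2, by ring⟩
  have hneg7nz : ((-7 : ℤ) : ZMod p) ≠ 0 := by
    rw [Ne, ZMod.intCast_zmod_eq_zero_iff_dvd, dvd_neg]
    intro hd
    exact hp7 ((Nat.prime_dvd_prime_iff_eq hp (by norm_num)).mp (by exact_mod_cast hd))
  have hsq7 : IsSquare ((-7 : ℤ) : ZMod p) := (legendreSym.eq_one_iff p hneg7nz).mp hneg7
  obtain ⟨r, hr⟩ := hsq7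
  haveI : NeZero p := ⟨hp.pos.ne'⟩
  set m : ℤ := (r.val : ℤ) with hm
  have hrm : ((m : ℤ) : ZMod p) = r := by
    rw [hm]; push_cast [ZMod.natCast_val, ZMod.cast_id]; rfl
  have hdpv : (p : ℤ) ∣ m ^ 2 + 7 := by
    rw [← ZMod.intCast_zmod_eq_zero_iff_dvd]
    push_cast
    rw [hrm, sq, ← hr]
    push_cast
    ring
  set w : R7 := ⟨m - 1, 2⟩ with hw
  have hnw : norm w = m ^ 2 + 7 := by simp [norm, hw]; ring
  have hpnotdvd : ¬((p : ℤ) ∣ 2) := by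
    intro hd
    have := Int.le_of_dvd (by norm_num) hd
    omega
  have hnotprime : ¬Prime ((p : ℕ) : R7) := by
    intro hpr
    have hd : ((p : ℕ) : R7) ∣ w * conj w := by
      rw [mul_conj, hnw]
      have hcc : ((p : ℕ) : R7) = ((p : ℤ) : R7) := by push_cast; ring
      rw [hcc]
      exact map_dvd (Int.castRingHom R7) hdpv
    rcases hpr.2.2 _ _ hd with hcd | hcd
    · have hii := ((intCast_dvd_iff p w).mp (by exact_mod_cast hcd)).2
      exact hpnotdvd hii
    · have hii := ((intCast_dvd_iff p (conj w)).mp (by exact_mod_cast hcd)).2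
      simp only [conj_im, hw] at hii
      exact hpnotdvd ((dvd_neg).mp hii)
  have hnu : ¬IsUnit ((p : ℕ) : R7) := by
    rw [← norm_eq_one_iff]
    have hnp : norm ((p : ℕ) : R7) = (p : ℤ) ^ 2 := by simp [norm]; ring
    rw [hnp]
    nlinarith [sq_nonneg ((p : ℤ)), hp3]
  have hnirr : ¬Irreducible ((p : ℕ) : R7) := fun hirr =>
    hnotprime (irreducible_iff_prime.mp hirr)
  rw [irreducible_iff] at hnirr
  push_neg at hnirr
  obtain ⟨x, y, hxy, hx, hy⟩ := hnirr hnu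
  refine ⟨x, norm_eq_prime_of_factor hp ?_ hx hy⟩
  rw [← norm_mul, ← hxy]
  simp [norm]; ring

/-- a prime-norm element (for `p ≠ 7`) does not divide its conjugate. -/
theorem not_dvd_conj_self {π : R7} {p : ℕ} (hp : p.Prime) (hπ : norm π = p)
    (hp7 : p ≠ 7) : ¬π ∣ conj π := by
  intro hd
  have hprime : Prime π := prime_of_norm_prime hp hπ
  have hdiff : conj π - π = (π.im : R7) * ⟨1, -2⟩ := by
    ext <;> simp [conj, sub_re, sub_im] <;> ring
  have hd2 : π ∣ (π.im : R7) * ⟨1, -2⟩ := by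
    rw [← hdiff]
    exact dvd_sub hd (dvd_refl π)
  rcases hprime.2.2 _ _ hd2 with hc | hc
  · have h1 : norm π ∣ norm ((π.im : R7)) := norm_dvd_norm hc
    have h2 : norm ((π.im : R7)) = π.im ^ 2 := by simp [norm]; ring
    rw [hπ, h2] at h1
    have hpZ : Prime (p : ℤ) := int_prime p hp
    have hdim : (p : ℤ) ∣ π.im := hpZ.dvd_of_dvd_pow h1
    have hdre : (p : ℤ) ∣ π.re * π.re := by
      have hre : π.re * π.re = norm π - π.re * π.im - 2 * π.im * π.im := by
        simp [norm]; ring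
      rw [hre, hπ]
      exact dvd_sub (dvd_sub (dvd_refl _) (Dvd.dvd.mul_left hdim _))
        (Dvd.dvd.mul_left hdim _)
    have hdre' : (p : ℤ) ∣ π.re := (hpZ.2.2 _ _ hdre).elim id id
    have hsq : (p : ℤ) * (p : ℤ) ∣ norm π := by
      obtain ⟨c1, hc1⟩ := hdre'
      obtain ⟨c2, hc2⟩ := hdim
      exact ⟨c1 * c1 + c1 * c2 + 2 * c2 * c2, by simp [norm, hc1, hc2]; ring⟩
    rw [hπ] at hsq
    have hle := Int.le_of_dvd (by exact_mod_cast hp.pos) hsq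
    have := hp.two_le
    nlinarith [hle]
  · have h1 : norm π ∣ norm (⟨1, -2⟩ : R7) := norm_dvd_norm hc
    have h2 : norm (⟨1, -2⟩ : R7) = 7 := by simp [norm]
    rw [hπ, h2] at h1
    have h1' : p ∣ 7 := by exact_mod_cast h1
    exact hp7 ((Nat.prime_dvd_prime_iff_eq hp (by norm_num)).mp h1')

end R7

namespace R7

theorem isCoprime_re_im {z : R7} (h : IsCoprime z (conj z)) : IsCoprime z.re z.im := by
  obtain ⟨S, T, hST⟩ := h
  refine ⟨S.re + T.re, T.re - 2 * S.im + 2 * T.im, ?_⟩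
  have h1 := congrArg re hST
  simp only [add_re, mul_re, conj_re, conj_im, one_re] at h1
  linear_combination h1

/-- Main existence induction: if all prime divisors of `N` are `≡ 1,2,4 mod 7`
then `N` is the norm of an element coprime to its conjugate. -/
theorem repB : ∀ N : ℕ, 0 < N →
    (∀ p : ℕ, p.Prime → p ∣ N → p % 7 = 1 ∨ p % 7 = 2 ∨ p % 7 = 4) →
    ∃ z : R7, norm z = (N : ℤ) ∧ IsCoprime z (conj z) := by
  intro N
  induction N using Nat.strong_induction_on with
  | _ N IH =>
    intro hN hcond
    rcases eq_or_ne N 1 with rfl | hN1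
    · exact ⟨1, by simp [norm], isCoprime_one_left⟩
    -- take the least prime factor
    set p := N.minFac with hpdef
    have hp : p.Prime := Nat.minFac_prime hN1
    have hpd : p ∣ N := Nat.minFac_dvd N
    set N' := N / p with hN'def
    have hfac : p * N' = N := Nat.mul_div_cancel' hpd
    have hN'pos : 0 < N' := Nat.div_pos (Nat.minFac_le hN) hp.pos
    have hN'lt : N' < N := Nat.div_lt_self hN hp.one_lt
    have hN'dvd : N' ∣ N := Nat.div_dvd_of_dvd hpd
    obtain ⟨z', hz'n, hz'c⟩ := IH N' hN'lt hN'pos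
      (fun q hq hqd => hcond q hq (hqd.trans hN'dvd))
    have hsp := hcond p hp hpd
    have hp7 : p ≠ 7 := by rcases hsp with h | h | h <;> omega
    obtain ⟨π, hπ⟩ := exists_norm_eq_prime hp hsp
    have hπpr : Prime π := prime_of_norm_prime hp hπ
    have hπcn : norm (conj π) = p := by rw [norm_conj, hπ]
    have hπcpr : Prime (conj π) := prime_of_norm_prime hp hπcn
    have hnd : ¬π ∣ conj π := not_dvd_conj_self hp hπ hp7
    by_cases hcase : π ∣ conj z'
    · -- use conj π
      refine ⟨conj π * z', ?_, ?_⟩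
      · rw [norm_mul, hπcn, hz'n, ← hfac]; push_cast; ring
      · rw [conj_mul, conj_conj]
        have c1 : IsCoprime (conj π) π := isCoprime_of_prime_not_dvd hπcpr.irreducible
          (fun hd => hnd (by simpa using conj_dvd hd))
        have c2 : IsCoprime (conj π) (conj z') := isCoprime_of_prime_not_dvd hπcpr.irreducible
          (fun hd => hπpr.not_unit (hz'c.isUnit_of_dvd' (by simpa using conj_dvd hd) hcase))
        have c3 : IsCoprime z' π := (isCoprime_of_prime_not_dvd hπpr.irreducible
          (fun hd => hπpr.not_unit (hz'c.isUnit_of_dvd' hd hcase))).symm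
        have c4 : IsCoprime z' (conj z') := hz'c
        exact IsCoprime.mul_left (c1.mul_right c2) (c3.mul_right c4)
    · -- use π
      refine ⟨π * z', ?_, ?_⟩
      · rw [norm_mul, hπ, hz'n, ← hfac]; push_cast; ring
      · rw [conj_mul]
        have c1 : IsCoprime π (conj π) := isCoprime_of_prime_not_dvd hπpr.irreducible hnd
        have c2 : IsCoprime π (conj z') := isCoprime_of_prime_not_dvd hπpr.irreducible hcase
        have c3 : IsCoprime z' (conj π) := (isCoprime_of_prime_not_dvd hπcpr.irreducible
          (fun hd => hcase (by simpa using conj_dvd hd))).symm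
        have c4 : IsCoprime z' (conj z') := hz'c
        exact IsCoprime.mul_left (c1.mul_right c2) (c3.mul_right c4)

end R7

open R7 in
/-- `-2N` is primitively represented by the form with Gram matrix
`[[-2,-1],[-1,-4]]` (i.e. `a² + ab + 2b² = N` with `gcd(a,b)=1`) iff `N` is
a product of primes `≡ 1, 2, 4 mod 7`, or 7 times such a product. -/
theorem stmt_4 (N : ℕ) (hN : 0 < N) :
    (∃ a b : ℤ, IsCoprime a b ∧ a ^ 2 + a * b + 2 * b ^ 2 = (N : ℤ)) ↔
      ((∀ p : ℕ, p.Prime → p ∣ N → (p % 7 = 1 ∨ p % 7 = 2 ∨ p % 7 = 4)) ∨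
        ∃ M : ℕ, N = 7 * M ∧
          ∀ p : ℕ, p.Prime → p ∣ M → (p % 7 = 1 ∨ p % 7 = 2 ∨ p % 7 = 4)) := by
  constructor
  · rintro ⟨a, b, hab, heq⟩
    set z : R7 := ⟨a, b⟩ with hz
    have hnz : norm z = (N : ℤ) := by
      rw [← heq]
      show a * a + a * b + 2 * b * b = a ^ 2 + a * b + 2 * b ^ 2
      ring
    have hint : ∀ q : ℕ, q.Prime → (q : ℤ) ∣ a → (q : ℤ) ∣ b → False := by
      intro q hq h1 h2
      have := hab.isUnit_of_dvd' h1 h2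
      rw [Int.isUnit_iff] at this
      have h2le := hq.two_le
      rcases this with h | h <;> omega
    have hP : ∀ p : ℕ, p.Prime → p ∣ N → p = 7 ∨ (p % 7 = 1 ∨ p % 7 = 2 ∨ p % 7 = 4) := by
      intro p hp hpN
      by_cases h7 : p = 7
      · exact Or.inl h7
      right
      by_contra hbad
      have h0 : p % 7 ≠ 0 := by
        intro h
        exact h7 ((Nat.prime_dvd_prime_iff_eq (by norm_num) hp).mp
          (Nat.dvd_of_mod_eq_zero h)).symm
      have hinert : Prime ((p : ℕ) : R7) := by
        apply prime_int_cast_of_inert hp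
        intro hor
        rcases hor with h | h | h | h
        · exact h0 h
        · exact hbad (Or.inl h)
        · exact hbad (Or.inr (Or.inl h))
        · exact hbad (Or.inr (Or.inr h))
      have hdvd : ((p : ℕ) : R7) ∣ z * conj z := by
        rw [mul_conj, hnz]
        have hcc : ((p : ℕ) : R7) = ((p : ℤ) : R7) := by push_cast; ring
        rw [hcc]
        exact map_dvd (Int.castRingHom R7) (by exact_mod_cast Int.natCast_dvd_natCast.mpr hpN)
      rcases hinert.2.2 _ _ hdvd with hc | hc
      · obtain ⟨h1, h2⟩ := (intCast_dvd_iff p z).mp (by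
          have hcc : ((p : ℕ) : R7) = ((p : ℤ) : R7) := by push_cast; ring
          rw [← hcc]; exact hc)
        exact hint p hp h1 h2
      · obtain ⟨h1, h2⟩ := (intCast_dvd_iff p (conj z)).mp (by
          have hcc : ((p : ℕ) : R7) = ((p : ℤ) : R7) := by push_cast; ring
          rw [← hcc]; exact hc)
        simp only [conj_re, conj_im] at h1 h2
        have hb : (p : ℤ) ∣ b := (dvd_neg).mp h2
        have ha : (p : ℤ) ∣ a := by
          have : a = (a + b) - b := by ring
          rw [this]
          exact dvd_sub h1 hb
        exact hint p hp ha hb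
    have hkey : ∀ y : R7, (7 : ℤ) ∣ norm y → u7 ∣ y := by
      intro y hy
      have hdd : u7 ∣ y * conj y := by
        rw [mul_conj]
        have h1 : u7 ∣ ((7 : ℤ) : R7) :=
          ⟨-u7, by rw [show u7 * -u7 = -(u7 * u7) by ring, u7_sq]; push_cast; ring⟩
        have h2 : ((7 : ℤ) : R7) ∣ ((R7.norm y : ℤ) : R7) := by
          obtain ⟨k, hk⟩ := hy
          exact ⟨((k : ℤ) : R7), by rw [hk]; push_cast; ring⟩
        exact h1.trans h2
      rcases u7_prime.2.2 _ _ hdd with hc | hc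
      · exact hc
      · have h2 := conj_dvd hc
        rw [conj_conj, conj_u7] at h2
        exact (neg_dvd).mp h2
    have h49 : ¬(49 ∣ N) := by
      intro h49
      have h7N : (7 : ℤ) ∣ norm z := by
        rw [hnz]
        exact_mod_cast Int.natCast_dvd_natCast.mpr (dvd_trans (by norm_num) h49)
      obtain ⟨y, hy⟩ := hkey z h7N
      have hyn : R7.norm z = 7 * R7.norm y := by rw [hy, R7.norm_mul, norm_u7]
      have h7y : (7 : ℤ) ∣ norm y := by
        obtain ⟨k, hk⟩ := h49
        have : (7 : ℤ) * norm y = 7 * (7 * k) := by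
          rw [← hyn, hnz, hk]; push_cast; ring
        have h2 := mul_left_cancel₀ (by norm_num : (7:ℤ) ≠ 0) this
        exact ⟨k, h2⟩
      obtain ⟨y2, hy2⟩ := hkey y h7y
      have hzz : z = ((-7 : ℤ) : R7) * y2 := by
        rw [hy, hy2, ← mul_assoc, u7_sq]
      have h7a : (7 : ℤ) ∣ a ∧ (7 : ℤ) ∣ b := by
        constructor
        · refine ⟨-y2.re, ?_⟩
          have hre : a = (-7) * y2.re - 2 * 0 * y2.im := congrArg re hzz
          linear_combination hre
        · refine ⟨-y2.im, ?_⟩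
          have him : b = (-7) * y2.im + 0 * y2.re + 0 * y2.im := congrArg im hzz
          linear_combination him
      exact hint 7 (by norm_num) h7a.1 h7a.2
    by_cases h7N : 7 ∣ N
    · right
      obtain ⟨M, hM⟩ := h7N
      refine ⟨M, hM, ?_⟩
      intro p hp hpM
      rcases hP p hp (by rw [hM]; exact Dvd.dvd.mul_left hpM 7) with rfl | hgood
      · exfalso
        apply h49
        obtain ⟨k, hk⟩ := hpM
        exact ⟨k, by rw [hM, hk]; ring⟩
      · exact hgood
    · left
      intro p hp hpN
      rcases hP p hp hpN with rfl | hgood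
      · exact absurd hpN h7N
      · exact hgood
  · rintro (hcond | ⟨M, rfl, hcond⟩)
    · obtain ⟨z, hzn, hzc⟩ := repB N hN hcond
      have hzn' : z.re * z.re + z.re * z.im + 2 * z.im * z.im = (N : ℤ) := hzn
      exact ⟨z.re, z.im, isCoprime_re_im hzc, by linear_combination hzn'⟩
    · have hM : 0 < M := by omega
      have h7M : ¬(7 ∣ M) := fun hd => by simpa using hcond 7 (by norm_num) hd
      obtain ⟨z, hzn, hzc⟩ := repB M hM hcond
      have hab : IsCoprime z.re z.im := isCoprime_re_im hzc
      set a := z.re with ha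
      set b := z.im with hb
      have hzn' : a * a + a * b + 2 * b * b = (M : ℤ) := hzn
      refine ⟨-a - 4 * b, 2 * a + b, ?_, by push_cast; linear_combination (7:ℤ) * hzn'⟩
      rw [Int.isCoprime_iff_gcd_eq_one]
      set g := Int.gcd (-a - 4 * b) (2 * a + b) with hg
      have hga : (g : ℤ) ∣ 7 * a := by
        have h1 : (g : ℤ) ∣ -a - 4 * b := Int.gcd_dvd_left _ _
        have h2 : (g : ℤ) ∣ 2 * a + b := Int.gcd_dvd_right _ _
        have : 7 * a = (-a - 4 * b) + 4 * (2 * a + b) := by ring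
        rw [this]
        exact dvd_add h1 (Dvd.dvd.mul_left h2 4)
      have hgb : (g : ℤ) ∣ 7 * b := by
        have h1 : (g : ℤ) ∣ -a - 4 * b := Int.gcd_dvd_left _ _
        have h2 : (g : ℤ) ∣ 2 * a + b := Int.gcd_dvd_right _ _
        have : 7 * b = (-2) * (-a - 4 * b) + (-1) * (2 * a + b) := by ring
        rw [this]
        exact dvd_add (Dvd.dvd.mul_left h1 _) (Dvd.dvd.mul_left h2 _)
      have hg7 : (g : ℤ) ∣ 7 := by
        have hd : (g : ℤ) ∣ (Int.gcd (7 * a) (7 * b) : ℤ) := Int.dvd_coe_gcd hga hgb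
        have : Int.gcd (7 * a) (7 * b) = 7 * Int.gcd a b := by
          rw [Int.gcd_mul_left]; norm_num
        rw [this, Int.isCoprime_iff_gcd_eq_one.mp hab, mul_one] at hd
        exact_mod_cast hd
      have hg7' : g ∣ 7 := by exact_mod_cast hg7
      rcases Nat.Prime.eq_one_or_self_of_dvd (by norm_num) g hg7' with h | h
      · exact h
      · exfalso
        apply h7M
        have hB : (7 : ℤ) ∣ 2 * a + b := by
          have hdr : (g : ℤ) ∣ 2 * a + b := Int.gcd_dvd_right _ _
          rw [h] at hdr
          exact_mod_cast hdr
        have h4M : (7 : ℤ) ∣ 4 * (M : ℤ) := by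
          have h4 : (4 * M : ℤ) = (2 * a + b) ^ 2 + 7 * b ^ 2 := by linear_combination (-4 : ℤ) * hzn'
          rw [h4]
          obtain ⟨k, hk⟩ := hB
          exact ⟨7 * k ^ 2 + b ^ 2, by rw [hk]; ring⟩
        have h7Mz : (7 : ℤ) ∣ (M : ℤ) := by
          rcases (int_prime 7 (by norm_num)).2.2 4 (M : ℤ) h4M with hc | hc
          · exfalso
            have := Int.le_of_dvd (by norm_num) hc
            omega
          · exact hc
        exact_mod_cast h7Mz
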